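/- arXiv:1510.03406 — 3 statements merged into one kernel-verified Lean document; each statement's English description precedes it below -/
import Mathlib

section
/- Let C \subseteq \mathbb{H}(n,2) be a 2-design of cardinality M with n+1 < M < 2n, and suppose the maximum distance \tilde{d} between distinct points of C satisfies \tilde{d} < n with n - \tilde{d} even. Then the minimal inner product \ell(C) = \min_{x\ne y \in C}\langle x,y\rangle satisfies \ell(C) \ge 1 - \sqrt{2M/n}. -/
/-- Hamming distance between two binary words. -/
def hammingDist' {n : ℕ} (x y : Fin n → Fin 2) : ℕ :=
  (Finset.univ.filter fun i => x i ≠ y i).card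

/-- "Inner product" `⟨x,y⟩ = 1 - 2 d(x,y)/n`. -/
noncomputable def innerProd {n : ℕ} (x y : Fin n → Fin 2) : ℝ :=
  1 - 2 * (hammingDist' x y : ℝ) / (n : ℝ)

theorem stmt_9 (n M : ℕ) (hn : 1 ≤ n)
    (C : Finset (Fin n → Fin 2)) (hC : C.card = M)
    (hM1 : n + 1 < M) (hM2 : M < 2 * n)
    -- 2-design property (instance for `f(t) = t²`):
    (hdes : ∀ u : Fin n → Fin 2, ∑ y ∈ C, (innerProd u y) ^ 2 = (M : ℝ) / (n : ℝ))
    -- `dt` is the maximum distance between distinct points of `C`: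
    (dt : ℕ)
    (hmax : ∀ x ∈ C, ∀ y ∈ C, x ≠ y → hammingDist' x y ≤ dt)
    (hach : ∃ x ∈ C, ∃ y ∈ C, x ≠ y ∧ hammingDist' x y = dt)
    (hdt : dt < n) (hev : Even (n - dt)) :
    ∀ x ∈ C, ∀ y ∈ C, x ≠ y →
      1 - Real.sqrt (2 * (M : ℝ) / (n : ℝ)) ≤ innerProd x y := by
  intro x hx y hy hxy
  have hn0 : (0:ℝ) < n := by exact_mod_cast hn
  -- innerProd x x = 1
  have hxx : innerProd x x = 1 := by
    have h0 : hammingDist' x x = 0 := by simp [hammingDist']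
    simp [innerProd, h0]
  -- extract terms for x and y from the design sum
  have hsub : ({x, y} : Finset (Fin n → Fin 2)) ⊆ C := by
    intro z hz
    rcases Finset.mem_insert.mp hz with rfl | hz
    · exact hx
    · exact (Finset.mem_singleton.mp hz) ▸ hy
  have hpair : (innerProd x x) ^ 2 + (innerProd x y) ^ 2 ≤
      ∑ z ∈ C, (innerProd x z) ^ 2 := by
    have := Finset.sum_le_sum_of_subset_of_nonneg hsub
      (fun i _ _ => sq_nonneg (innerProd x i))
    simpa [Finset.sum_pair hxy] using this
  have ha2 : (innerProd x y) ^ 2 ≤ (M:ℝ)/(n:ℝ) - 1 := by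
    have := hdes x
    rw [hxx] at hpair
    linarith [hpair, this.symm ▸ hpair]
  set a := innerProd x y with ha
  set s := Real.sqrt (2 * (M : ℝ) / (n : ℝ)) with hs
  have hs0 : 0 ≤ s := Real.sqrt_nonneg _
  have harg : (0:ℝ) ≤ 2 * (M : ℝ) / (n : ℝ) := by positivity
  have hs2 : s ^ 2 = 2 * (M : ℝ) / (n : ℝ) := Real.sq_sqrt harg
  set t := (M:ℝ)/(n:ℝ) with htdef
  have hs2' : s ^ 2 = 2 * t := by rw [hs2, htdef]; ring
  have ht1 : 1 ≤ t := by nlinarith [sq_nonneg a]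
  have h2s : 2 * s ≤ t + 2 := by nlinarith [sq_nonneg (t - 2), hs0, ht1, hs2']
  -- a ≥ -√(t-1)
  have habs : |a| ≤ Real.sqrt (t - 1) := by
    have := Real.sqrt_le_sqrt ha2
    rwa [Real.sqrt_sq_eq_abs] at this
  have h1 : -Real.sqrt (t - 1) ≤ a := neg_le_of_abs_le habs
  -- √(t-1) ≤ s - 1
  have h2 : Real.sqrt (t - 1) ≤ s - 1 := by
    have hle : t - 1 ≤ (s - 1) ^ 2 := by nlinarith [hs2', h2s, hs0, ht1]
    have := Real.sqrt_le_sqrt hle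
    rwa [Real.sqrt_sq (by nlinarith [hs2', ht1, hs0] : (0:ℝ) ≤ s - 1)] at this
  linarith
end

section
/- Let C \subseteq \mathbb{H}(n,2) be a 2-design of cardinality M with n+1 < M < 2n whose minimum distance d is even. Then the maximal inner product s(C) = \max_{x\ne y \in C}\langle x,y\rangle satisfies s(C) \le -1 + \sqrt{2(M-2)/n}. -/
set_option maxHeartbeats 1000000 in
theorem stmt_10 (n M : ℕ) (hn : 1 ≤ n)
    (C : Finset (Fin n → Fin 2)) (hC : C.card = M)
    (hM1 : n + 1 < M) (hM2 : M < 2 * n)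
    -- 2-design property (instances for the polynomials `f(t) = (t-a)²`):
    (hdes : ∀ u : Fin n → Fin 2, ∀ a : ℝ,
      ∑ y ∈ C, (innerProd u y - a) ^ 2 = (a ^ 2 + 1 / (n : ℝ)) * (M : ℝ))
    -- `d` is the minimum distance of `C`, and it is even:
    (d : ℕ)
    (hmin : ∀ x ∈ C, ∀ y ∈ C, x ≠ y → d ≤ hammingDist' x y)
    (hach : ∃ x ∈ C, ∃ y ∈ C, x ≠ y ∧ hammingDist' x y = d)
    (hev : Even d) :
    ∀ x ∈ C, ∀ y ∈ C, x ≠ y →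
      innerProd x y ≤ -1 + Real.sqrt (2 * ((M : ℝ) - 2) / (n : ℝ)) := by
  classical
  intro p hp q hq hpq
  have hn' : (1:ℝ) ≤ (n:ℝ) := by exact_mod_cast hn
  have hnpos : (0:ℝ) < (n:ℝ) := by linarith
  have hM3 : 3 ≤ M := by omega
  have hMr : (3:ℝ) ≤ (M:ℝ) := by exact_mod_cast hM3
  have hden : (0:ℝ) < (M:ℝ) - 2 := by linarith
  obtain ⟨x, hx, y, hy, hxy, hd⟩ := hach
  obtain ⟨k, hk⟩ := hev
  set S := Finset.univ.filter (fun i => x i ≠ y i) with hS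
  have hScard : S.card = d := hd
  have hkS : k ≤ S.card := by omega
  obtain ⟨T, hTS, hTcard⟩ := Finset.exists_subset_card_eq hkS
  set u : Fin n → Fin 2 := fun i => if i ∈ T then y i else x i with hu
  have hux : hammingDist' u x = k := by
    rw [hammingDist']
    have hflt : (Finset.univ.filter fun i => u i ≠ x i) = T := by
      ext i
      simp only [Finset.mem_filter, Finset.mem_univ, true_and, hu]
      by_cases hiT : i ∈ T
      · have hiS := hTS hiT
        simp only [hS, Finset.mem_filter, Finset.mem_univ, true_and] at hiS
        simp only [hiT, if_true, iff_true]
        exact fun h => hiS h.symm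
      · simp [hiT]
    rw [hflt, hTcard]
  have huy : hammingDist' u y = k := by
    rw [hammingDist']
    have hflt : (Finset.univ.filter fun i => u i ≠ y i) = S \ T := by
      ext i
      simp only [Finset.mem_filter, Finset.mem_univ, true_and, Finset.mem_sdiff, hu]
      by_cases hiT : i ∈ T
      · simp [hiT]
      · simp only [hiT, if_false, not_false_iff, and_true]
        simp [hS]
    rw [hflt, Finset.card_sdiff_of_subset hTS, hScard, hTcard]
    omega
  set t : ℝ := 1 - 2 * (k:ℝ) / (n:ℝ) with htdef
  have huxt : innerProd u x = t := by rw [innerProd, hux]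
  have huyt : innerProd u y = t := by rw [innerProd, huy]
  have key : ∀ a : ℝ, 2 * (t - a)^2 ≤ (a^2 + 1/(n:ℝ)) * (M:ℝ) := by
    intro a
    have h1 := hdes u a
    have h2 : ({x, y} : Finset (Fin n → Fin 2)) ⊆ C := by
      intro z hz
      simp only [Finset.mem_insert, Finset.mem_singleton] at hz
      rcases hz with rfl | rfl <;> assumption
    have h3 : ∑ z ∈ ({x,y} : Finset (Fin n → Fin 2)), (innerProd u z - a)^2
        ≤ ∑ z ∈ C, (innerProd u z - a)^2 :=
      Finset.sum_le_sum_of_subset_of_nonneg h2 (fun z _ _ => sq_nonneg _)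
    rw [Finset.sum_pair hxy, huxt, huyt] at h3
    rw [h1] at h3
    linarith
  have hMpos : (0:ℝ) < (M:ℝ) := by linarith
  have hclean : 2*t^2*(M:ℝ)^2*(n:ℝ) ≤ 4*t^2*(M:ℝ)*(n:ℝ) + ((M:ℝ)-2)^2*(M:ℝ) := by
    have h := key (-2*t/((M:ℝ)-2))
    have hne : ((M:ℝ) - 2) ≠ 0 := ne_of_gt hden
    have hne' : ((n:ℝ)) ≠ 0 := ne_of_gt hnpos
    field_simp at h
    replace h : 2*t^2*(M:ℝ)^2*(n:ℝ) * (((M:ℝ)-2)^2) ≤ (4*t^2*(M:ℝ)*(n:ℝ) + ((M:ℝ)-2)^2*(M:ℝ)) * (((M:ℝ)-2)^2) := by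
      have h' : 2*t^2*(M:ℝ)^2*(n:ℝ) ≤ 4*t^2*(M:ℝ)*(n:ℝ) + ((M:ℝ)-2)^2*(M:ℝ) := by linarith [h]
      exact mul_le_mul_of_nonneg_right h' (le_of_lt (pow_pos hden 2))
    have h5 : 2*t^2*(M:ℝ)^2*(n:ℝ) * (((M:ℝ)-2)^2)
        ≤ (4*t^2*(M:ℝ)*(n:ℝ) + ((M:ℝ)-2)^2*(M:ℝ)) * (((M:ℝ)-2)^2) := by
      linarith [h]
    exact le_of_mul_le_mul_right h5 (pow_pos hden 2)
  have ht : 4 * t^2 ≤ 2 * ((M:ℝ) - 2) / (n:ℝ) := by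
    rw [le_div_iff₀ hnpos]
    nlinarith [hclean, mul_pos hMpos hden]
  have h2t : 2*t ≤ Real.sqrt (2 * ((M:ℝ) - 2) / (n:ℝ)) := by
    have h1 : (2*t)^2 ≤ 2 * ((M:ℝ) - 2) / (n:ℝ) := by nlinarith [ht]
    calc 2*t ≤ |2*t| := le_abs_self _
      _ = Real.sqrt ((2*t)^2) := (Real.sqrt_sq_eq_abs _).symm
      _ ≤ _ := Real.sqrt_le_sqrt h1
  have hdist : (d:ℝ) ≤ (hammingDist' p q : ℝ) := by
    exact_mod_cast hmin p hp q hq hpq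
  rw [innerProd]
  have hdk : (d:ℝ) = 2*(k:ℝ) := by
    have : d = 2*k := by omega
    exact_mod_cast this
  have hle : 2 * (d:ℝ) / (n:ℝ) ≤ 2 * (hammingDist' p q : ℝ) / (n:ℝ) := by gcongr
  rw [hdk] at hle
  rw [htdef] at h2t
  have h2t' : 2 - 4*((k:ℝ)/(n:ℝ)) ≤ Real.sqrt (2 * ((M:ℝ) - 2) / (n:ℝ)) := by
    calc 2 - 4*((k:ℝ)/(n:ℝ)) = 2*(1 - 2*(k:ℝ)/(n:ℝ)) := by ring
    _ ≤ _ := h2t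
  have hle' : 4*((k:ℝ)/(n:ℝ)) ≤ 2*((hammingDist' p q : ℝ)/(n:ℝ)) := by
    calc 4*((k:ℝ)/(n:ℝ)) = 2*(2*(k:ℝ))/(n:ℝ) := by ring
    _ ≤ 2 * (hammingDist' p q : ℝ) / (n:ℝ) := hle
    _ = 2*((hammingDist' p q : ℝ)/(n:ℝ)) := by ring
  calc 1 - 2 * (hammingDist' p q : ℝ) / (n:ℝ)
      = 1 - 2*((hammingDist' p q : ℝ)/(n:ℝ)) := by ring
    _ ≤ -1 + Real.sqrt (2 * ((M:ℝ) - 2) / (n:ℝ)) := by linarith [h2t', hle']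
end

section
/- Let q=2 and suppose \ell < s with \ell \le \langle x,y\rangle \le s for all distinct x,y in a 2-design C \subseteq \mathbb{H}(n,2) of cardinality M. Let h be convex on [\ell, s]. Then E(n,C;h) \le \frac{(M-1)(s\,h(\ell) - \ell\, h(s)) + h(\ell) - h(s)}{s - \ell}. -/
theorem stmt_11 (n M : ℕ) (hn : 1 ≤ n)
    (C : Finset (Fin n → Fin 2)) (hC : C.card = M) (hM : 1 ≤ M)
    (h : ℝ → ℝ) (l s : ℝ) (hls : l < s)
    (hrange : ∀ x ∈ C, ∀ y ∈ C, x ≠ y → innerProd x y ∈ Set.Icc l s)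
    (hconv : ConvexOn ℝ (Set.Icc l s) h)
    -- 2-design conditions `∑_{x,y∈C} Q_i(⟨x,y⟩) = 0` for `i = 1, 2`
    -- (for `q = 2`: `Q_1(t) = t` and `Q_2(t)` is proportional to `n t² - 1`):
    (hdes1 : ∑ x ∈ C, ∑ y ∈ C, innerProd x y = 0)
    (hdes2 : ∑ x ∈ C, ∑ y ∈ C, ((n : ℝ) * (innerProd x y) ^ 2 - 1) = 0) :
    (1 / (M : ℝ)) * ∑ x ∈ C, ∑ y ∈ C \ {x}, h (innerProd x y) ≤
      (((M : ℝ) - 1) * (s * h l - l * h s) + h l - h s) / (s - l) := by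
  have hsl : (0:ℝ) < s - l := sub_pos.2 hls
  have hM0 : (0:ℝ) < (M:ℝ) := by exact_mod_cast hM
  have hip_self : ∀ x : Fin n → Fin 2, innerProd x x = 1 := by
    intro x; simp [innerProd, hammingDist']
  -- sum of inner products over distinct pairs
  have hS : ∑ x ∈ C, ∑ y ∈ C \ {x}, innerProd x y = -(M:ℝ) := by
    have key : ∀ x ∈ C, ∑ y ∈ C \ {x}, innerProd x y
        = (∑ y ∈ C, innerProd x y) - 1 := by
      intro x hx
      rw [Finset.sum_sdiff_eq_sub (Finset.singleton_subset_iff.2 hx),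
        Finset.sum_singleton, hip_self]
    rw [Finset.sum_congr rfl key, Finset.sum_sub_distrib, hdes1,
      Finset.sum_const, hC]
    simp
  -- number of ordered distinct pairs
  have hcard : ∀ x ∈ C, ((C \ {x}).card : ℝ) = (M:ℝ) - 1 := by
    intro x hx
    rw [Finset.card_sdiff_of_subset (Finset.singleton_subset_iff.2 hx),
      Finset.card_singleton, hC, Nat.cast_sub hM, Nat.cast_one]
  -- secant bound from convexity
  have hbound : ∀ t ∈ Set.Icc l s,
      (s - l) * h t ≤ (s - t) * h l + (t - l) * h s := by
    intro t ht
    set a := (s - t) / (s - l) with ha_def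
    set b := (t - l) / (s - l) with hb_def
    have ha : 0 ≤ a := div_nonneg (by linarith [ht.2]) hsl.le
    have hb : 0 ≤ b := div_nonneg (by linarith [ht.1]) hsl.le
    have hab : a + b = 1 := by
      rw [ha_def, hb_def, ← add_div, div_eq_one_iff_eq hsl.ne']
      ring
    have hpt : a • l + b • s = t := by
      simp only [smul_eq_mul, ha_def, hb_def]
      field_simp
      ring
    have := hconv.2 (Set.mem_Icc.2 ⟨le_refl l, hls.le⟩)
      (Set.mem_Icc.2 ⟨hls.le, le_refl s⟩) ha hb hab
    rw [hpt] at this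
    have h2 : h t ≤ a * h l + b * h s := by simpa using this
    have h3 : (s - l) * (a * h l + b * h s) = (s - t) * h l + (t - l) * h s := by
      rw [ha_def, hb_def]; field_simp; try ring
    nlinarith [mul_le_mul_of_nonneg_left h2 hsl.le]
  -- main summed inequality
  set T := ∑ x ∈ C, ∑ y ∈ C \ {x}, h (innerProd x y) with hT_def
  have hmain : (s - l) * T ≤
      (s * h l - l * h s) * ((M:ℝ) * ((M:ℝ) - 1)) + (h s - h l) * (-(M:ℝ)) := by
    have step1 : (s - l) * T
        = ∑ x ∈ C, ∑ y ∈ C \ {x}, (s - l) * h (innerProd x y) := by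
      rw [hT_def, Finset.mul_sum]
      exact Finset.sum_congr rfl fun x _ => by rw [Finset.mul_sum]
    have step2 : ∑ x ∈ C, ∑ y ∈ C \ {x}, (s - l) * h (innerProd x y)
        ≤ ∑ x ∈ C, ∑ y ∈ C \ {x},
            ((s * h l - l * h s) + (h s - h l) * innerProd x y) := by
      refine Finset.sum_le_sum fun x hx => Finset.sum_le_sum fun y hy => ?_
      obtain ⟨hyC, hyx⟩ := Finset.mem_sdiff.1 hy
      have hne : x ≠ y := fun e => hyx (Finset.mem_singleton.2 e.symm)
      have := hbound _ (hrange x hx y hyC hne)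
      nlinarith [this]
    have step3 : ∑ x ∈ C, ∑ y ∈ C \ {x},
          ((s * h l - l * h s) + (h s - h l) * innerProd x y)
        = (s * h l - l * h s) * ((M:ℝ) * ((M:ℝ) - 1)) + (h s - h l) * (-(M:ℝ)) := by
      simp_rw [Finset.sum_add_distrib, Finset.sum_const, ← Finset.mul_sum,
        nsmul_eq_mul]
      rw [hS]
      have : ∑ x ∈ C, ((C \ {x}).card : ℝ) * (s * h l - l * h s)
          = ((M:ℝ) - 1) * (s * h l - l * h s) * C.card := by
        rw [Finset.sum_congr rfl fun x hx => by rw [hcard x hx],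
          Finset.sum_const, nsmul_eq_mul]
        ring
      rw [this, hC]
      ring
    rw [step1, ← step3]; exact step2
  -- conclude
  rw [one_div, inv_mul_eq_div, div_le_div_iff₀ hM0 hsl]
  nlinarith [hmain]
end
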